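/- Let d ≥ 1 and let R₀ be a Borel subset of (-1/2, 1/2]^d that contains an open neighborhood of the origin and satisfies the boundary condition. Let t ∈ [-1/2, 1/2]^d and Z^d_t = t + Z^d. Let (Δₙ) be a sequence of d × d diagonal matrices with positive diagonal entries λ₁⁽ⁿ⁾, …, λ_d⁽ⁿ⁾, each tending to ∞, with max₁≤i≤d λᵢ⁽ⁿ⁾ = O(min₁≤i≤d λᵢ⁽ⁿ⁾), and set λₙ^max = max₁≤i≤d λᵢ⁽ⁿ⁾. Then there exists a constant C > 0 such that for all n and all i ∈ Z^d, the number of points j ∈ Z^d_t for which the cube j + [-2, 2]^d intersects both the closure of i + ΔₙR₀ and the closure of the complement of i + ΔₙR₀ is at most C (λₙ^max)^{d-1}. -/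

import Mathlib

open MeasureTheory Filter Topology

lemma meets_frontier {X : Type*} [TopologicalSpace X] {K S : Set X}
    (hK : IsPreconnected K) (h1 : (K ∩ closure S).Nonempty)
    (h2 : (K ∩ closure Sᶜ).Nonempty) : (K ∩ frontier S).Nonempty := by
  by_contra hempty
  rw [Set.not_nonempty_iff_eq_empty] at hempty
  have hsub : K ⊆ interior S ∪ interior Sᶜ := by
    intro x hx
    by_contra hx'
    have hx1 : x ∉ interior S := fun h => hx' (Or.inl h)
    have hx2 : x ∉ interior Sᶜ := fun h => hx' (Or.inr h)
    have : x ∈ frontier S := by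
      rw [frontier_eq_closure_inter_closure]
      constructor
      · rw [interior_compl] at hx2; simpa using hx2
      · rw [closure_compl]; simpa using hx1
    exact Set.eq_empty_iff_forall_notMem.mp hempty x ⟨hx, this⟩
  have hu1 : (K ∩ interior S).Nonempty := by
    obtain ⟨x, hxK, hxc⟩ := h1
    refine ⟨x, hxK, ?_⟩
    rcases hsub hxK with h | h
    · exact h
    · rw [interior_compl] at h; exact absurd hxc h
  have hu2 : (K ∩ interior Sᶜ).Nonempty := by
    obtain ⟨x, hxK, hxc⟩ := h2
    refine ⟨x, hxK, ?_⟩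
    rcases hsub hxK with h | h
    · rw [closure_compl] at hxc; exact absurd h hxc
    · exact h
  obtain ⟨x, hx⟩ := hK (interior S) (interior Sᶜ) isOpen_interior isOpen_interior hsub hu1 hu2
  rw [interior_compl] at hx
  exact hx.2.2 (interior_subset_closure hx.2.1)

lemma key_point (d : ℕ) (R₀ : Set (Fin d → ℝ)) (i : Fin d → ℤ) (lam : Fin d → ℝ)
    (hpos : ∀ m, 0 < lam m) (t : Fin d → ℝ) (j : Fin d → ℤ)
    (h1 : ((Set.univ.pi fun m => Set.Icc (t m + (j m : ℝ) - 2) (t m + (j m : ℝ) + 2)) ∩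
          closure ((fun x m => (i m : ℝ) + lam m * x m) '' R₀)).Nonempty)
    (h2 : ((Set.univ.pi fun m => Set.Icc (t m + (j m : ℝ) - 2) (t m + (j m : ℝ) + 2)) ∩
          closure (((fun x m => (i m : ℝ) + lam m * x m) '' R₀)ᶜ)).Nonempty) :
    ∃ y ∈ frontier R₀, ∀ m, |t m + (j m : ℝ) - ((i m : ℝ) + lam m * y m)| ≤ 2 := by
  set H : (Fin d → ℝ) ≃ₜ (Fin d → ℝ) := Homeomorph.piCongrRight fun m =>
    (Homeomorph.mulLeft₀ (lam m) (hpos m).ne').trans (Homeomorph.addLeft (i m : ℝ)) with hHdef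
  have hH : (fun x m => (i m : ℝ) + lam m * x m) = ⇑H := rfl
  have hconv : Convex ℝ (Set.univ.pi fun m =>
      Set.Icc (t m + (j m : ℝ) - 2) (t m + (j m : ℝ) + 2)) :=
    convex_pi fun m _ => convex_Icc _ _
  rw [hH] at h1 h2
  obtain ⟨z, hzK, hzf⟩ := meets_frontier hconv.isPreconnected h1 h2
  rw [← Homeomorph.image_frontier] at hzf
  obtain ⟨y, hy, rfl⟩ := hzf
  refine ⟨y, hy, fun m => ?_⟩
  have hm : H y m ∈ Set.Icc (t m + (j m : ℝ) - 2) (t m + (j m : ℝ) + 2) :=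
    hzK m (Set.mem_univ m)
  have hHy : H y m = (i m : ℝ) + lam m * y m := rfl
  rw [hHy] at hm
  rw [abs_le]
  constructor <;> [linarith [hm.2]; linarith [hm.1]]

lemma closure_sub (d : ℕ) (R₀ : Set (Fin d → ℝ))
    (hsub : R₀ ⊆ Set.univ.pi fun _ => Set.Ioc (-(1/2) : ℝ) (1/2)) :
    closure R₀ ⊆ Set.univ.pi fun _ => Set.Icc (-(1/2) : ℝ) (1/2) :=
  closure_minimal (hsub.trans (Set.pi_mono fun _ _ => Set.Ioc_subset_Icc_self))
    (isClosed_set_pi fun _ _ => isClosed_Icc)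

lemma caseB (d : ℕ) (R₀ : Set (Fin d → ℝ))
    (hsub : R₀ ⊆ Set.univ.pi fun _ => Set.Ioc (-(1/2) : ℝ) (1/2))
    (t : Fin d → ℝ) (ht : ∀ i, t i ∈ Set.Icc (-(1/2) : ℝ) (1/2))
    (i : Fin d → ℤ) (lam : Fin d → ℝ) (hpos : ∀ m, 0 < lam m) (hle1 : ∀ m, lam m ≤ 1) :
    (Set.ncard {j : Fin d → ℤ |
        ((Set.univ.pi fun m => Set.Icc (t m + (j m : ℝ) - 2) (t m + (j m : ℝ) + 2)) ∩
          closure ((fun x m => (i m : ℝ) + lam m * x m) '' R₀)).Nonempty ∧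
        ((Set.univ.pi fun m => Set.Icc (t m + (j m : ℝ) - 2) (t m + (j m : ℝ) + 2)) ∩
          closure (((fun x m => (i m : ℝ) + lam m * x m) '' R₀)ᶜ)).Nonempty}) ≤ 7 ^ d := by
  classical
  set B : Finset (Fin d → ℤ) := Fintype.piFinset fun _ => Finset.Icc (-3 : ℤ) 3 with hB
  have hcard : B.card = 7 ^ d := by
    rw [hB, Fintype.card_piFinset_const]
    simp [Int.card_Icc]
  calc Set.ncard _ ≤ (B : Set (Fin d → ℤ)).ncard := by
        apply Set.ncard_le_ncard_of_injOn (fun j m => j m - i m)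
        · rintro j ⟨h1, h2⟩
          obtain ⟨y, hy, hb⟩ := key_point d R₀ i lam hpos t j h1 h2
          have hyc : ∀ m, y m ∈ Set.Icc (-(1/2) : ℝ) (1/2) := fun m =>
            closure_sub d R₀ hsub (frontier_subset_closure hy) m (Set.mem_univ m)
          show _ ∈ (B : Set (Fin d → ℤ))
          rw [Finset.mem_coe, hB, Fintype.mem_piFinset]
          intro m
          rw [Finset.mem_Icc]
          have h1 := (abs_le.mp (hb m)).1
          have h2 := (abs_le.mp (hb m)).2
          have hly : |lam m * y m| ≤ 1 / 2 := by
            rw [abs_mul]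
            calc |lam m| * |y m| ≤ 1 * (1/2) := by
                  apply mul_le_mul (by rw [abs_of_pos (hpos m)]; exact hle1 m)
                    (abs_le.mpr ⟨(hyc m).1, (hyc m).2⟩) (abs_nonneg _) zero_le_one
              _ = 1 / 2 := by ring
          have hly1 := (abs_le.mp hly).1
          have hly2 := (abs_le.mp hly).2
          have htm1 := (ht m).1
          have htm2 := (ht m).2
          constructor
          · have : (-3 : ℝ) ≤ (j m : ℝ) - (i m : ℝ) := by linarith
            exact_mod_cast this
          · have : (j m : ℝ) - (i m : ℝ) ≤ 3 := by linarith
            exact_mod_cast this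
        · intro j _ j' _ h
          funext m
          have h2 : j m - i m = j' m - i m := congrFun h m
          omega
    _ = 7 ^ d := by rw [Set.ncard_coe_finset, hcard]

lemma ncard_prod' {α β : Type*} (s : Set α) (t : Set β) :
    (s ×ˢ t).ncard = s.ncard * t.ncard := by
  rw [← Nat.card_coe_set_eq, ← Nat.card_coe_set_eq, ← Nat.card_coe_set_eq,
    ← Nat.card_prod]
  exact Nat.card_congr (Equiv.Set.prod s t)

lemma caseA (d : ℕ) (hd : 1 ≤ d) (R₀ : Set (Fin d → ℝ))
    (hsub : R₀ ⊆ Set.univ.pi fun _ => Set.Ioc (-(1/2) : ℝ) (1/2))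
    (C : ℝ) (hC : 0 < C)
    (hbd : ∀ a : ℝ, 0 < a → a ≤ 1 →
      (Set.ncard {j : Fin d → ℤ |
        (Set.univ.pi (fun i => Set.Icc (a * (j i : ℝ)) (a * ((j i : ℝ) + 1))) ∩
          closure R₀).Nonempty ∧
        (Set.univ.pi (fun i => Set.Icc (a * (j i : ℝ)) (a * ((j i : ℝ) + 1))) ∩
          closure R₀ᶜ).Nonempty} : ℝ) ≤ C * a ^ ((1 : ℤ) - d))
    (t : Fin d → ℝ) (i : Fin d → ℤ) (lam : Fin d → ℝ) (hpos : ∀ m, 0 < lam m)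
    (M : ℝ) (hMle : ∀ m, lam m ≤ M) (hM1 : 1 ≤ M) :
    (Set.ncard {j : Fin d → ℤ |
        ((Set.univ.pi fun m => Set.Icc (t m + (j m : ℝ) - 2) (t m + (j m : ℝ) + 2)) ∩
          closure ((fun x m => (i m : ℝ) + lam m * x m) '' R₀)).Nonempty ∧
        ((Set.univ.pi fun m => Set.Icc (t m + (j m : ℝ) - 2) (t m + (j m : ℝ) + 2)) ∩
          closure (((fun x m => (i m : ℝ) + lam m * x m) '' R₀)ᶜ)).Nonempty} : ℝ)
      ≤ (C * 19 ^ d) * M ^ (d - 1) := by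
  classical
  have hM0 : (0 : ℝ) < M := lt_of_lt_of_le one_pos hM1
  set a : ℝ := 1 / M with ha
  have ha0 : 0 < a := by positivity
  have ha1 : a ≤ 1 := (div_le_one hM0).mpr hM1
  have hMa : M * a = 1 := by rw [ha]; field_simp
  set D : Set (Fin d → ℤ) := {j : Fin d → ℤ |
        ((Set.univ.pi fun m => Set.Icc (t m + (j m : ℝ) - 2) (t m + (j m : ℝ) + 2)) ∩
          closure ((fun x m => (i m : ℝ) + lam m * x m) '' R₀)).Nonempty ∧
        ((Set.univ.pi fun m => Set.Icc (t m + (j m : ℝ) - 2) (t m + (j m : ℝ) + 2)) ∩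
          closure (((fun x m => (i m : ℝ) + lam m * x m) '' R₀)ᶜ)).Nonempty} with hD
  set T : Set (Fin d → ℤ) := {j : Fin d → ℤ |
        (Set.univ.pi (fun i => Set.Icc (a * (j i : ℝ)) (a * ((j i : ℝ) + 1))) ∩
          closure R₀).Nonempty ∧
        (Set.univ.pi (fun i => Set.Icc (a * (j i : ℝ)) (a * ((j i : ℝ) + 1))) ∩
          closure R₀ᶜ).Nonempty} with hT
  -- T is finite
  have hTfin : T.Finite := by
    apply Set.Finite.subset
      ((Fintype.piFinset fun _ : Fin d => Finset.Icc ⌈-(1/2)/a - 1⌉ ⌊(1/2)/a⌋).finite_toSet)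
    rintro k ⟨⟨w, hw1, hw2⟩, -⟩
    rw [Finset.mem_coe, Fintype.mem_piFinset]
    intro m
    have hwm : w m ∈ Set.Icc (a * (k m : ℝ)) (a * ((k m : ℝ) + 1)) := hw1 m (Set.mem_univ m)
    have hwc : w m ∈ Set.Icc (-(1/2) : ℝ) (1/2) :=
      closure_sub d R₀ hsub hw2 m (Set.mem_univ m)
    rw [Finset.mem_Icc]
    constructor
    · rw [Int.ceil_le]
      rw [div_sub' ha0.ne', div_le_iff₀ ha0] at *
      nlinarith [hwm.2, hwc.1]
    · rw [Int.le_floor]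
      rw [le_div_iff₀ ha0]
      nlinarith [hwm.1, hwc.2]
  -- extract boundary points
  have hkey : ∀ j : Fin d → ℤ, j ∈ D → ∃ y, y ∈ frontier R₀ ∧
      ∀ m, |t m + (j m : ℝ) - ((i m : ℝ) + lam m * y m)| ≤ 2 := by
    rintro j ⟨h1, h2⟩
    obtain ⟨y, hy, hb⟩ := key_point d R₀ i lam hpos t j h1 h2
    exact ⟨y, hy, hb⟩
  choose! y hyf hyb using hkey
  set B : Finset (Fin d → ℤ) := Fintype.piFinset fun _ => Finset.Icc (-9 : ℤ) 9 with hB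
  have hBcard : B.card = 19 ^ d := by
    rw [hB, Fintype.card_piFinset_const]
    simp [Int.card_Icc]
  set F : (Fin d → ℤ) → (Fin d → ℤ) × (Fin d → ℤ) := fun j =>
    (fun m => ⌊y j m * M⌋,
     fun m => j m - ⌊(i m : ℝ) + lam m * (a * (⌊y j m * M⌋ : ℝ)) - t m⌋) with hF
  have hmain : D.ncard ≤ (T ×ˢ (B : Set (Fin d → ℤ))).ncard := by
    refine Set.ncard_le_ncard_of_injOn F ?_ ?_ (hTfin.prod B.finite_toSet)
    · intro j hj
      have hyfront := hyf j hj
      have hc1 : y j ∈ closure R₀ := frontier_subset_closure hyfront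
      have hc2 : y j ∈ closure R₀ᶜ := by
        rw [← frontier_compl] at hyfront
        exact frontier_subset_closure hyfront
      have hk1 : ∀ m, a * (⌊y j m * M⌋ : ℝ) ≤ y j m := by
        intro m
        have h1 : (⌊y j m * M⌋ : ℝ) ≤ y j m * M := Int.floor_le _
        have := mul_le_mul_of_nonneg_left h1 ha0.le
        calc a * (⌊y j m * M⌋ : ℝ) ≤ a * (y j m * M) := this
          _ = y j m := by linear_combination (y j m) * hMa
      have hk2 : ∀ m, y j m ≤ a * ((⌊y j m * M⌋ : ℝ) + 1) := by
        intro m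
        have h1 : y j m * M ≤ (⌊y j m * M⌋ : ℝ) + 1 := (Int.lt_floor_add_one _).le
        have := mul_le_mul_of_nonneg_left h1 ha0.le
        calc y j m = a * (y j m * M) := by linear_combination -(y j m) * hMa
          _ ≤ a * ((⌊y j m * M⌋ : ℝ) + 1) := this
      have hymem : y j ∈ Set.univ.pi fun m =>
          Set.Icc (a * ((⌊y j m * M⌋ : ℝ))) (a * ((⌊y j m * M⌋ : ℝ) + 1)) :=
        fun m _ => ⟨hk1 m, hk2 m⟩
      constructor
      · exact ⟨⟨y j, hymem, hc1⟩, ⟨y j, hymem, hc2⟩⟩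
      · show _ ∈ (B : Set (Fin d → ℤ))
        rw [Finset.mem_coe, hB, Fintype.mem_piFinset]
        intro m
        rw [Finset.mem_Icc]
        set c : ℝ := (i m : ℝ) + lam m * (a * (⌊y j m * M⌋ : ℝ)) - t m with hc
        have hfl1 : (⌊c⌋ : ℝ) ≤ c := Int.floor_le _
        have hfl2 : c - 1 < (⌊c⌋ : ℝ) := Int.sub_one_lt_floor _
        have hb1 := (abs_le.mp (hyb j hj m)).1
        have hb2 := (abs_le.mp (hyb j hj m)).2
        have hd1 : lam m * (a * (⌊y j m * M⌋ : ℝ)) ≤ lam m * y j m :=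
          mul_le_mul_of_nonneg_left (hk1 m) (hpos m).le
        have hd2 : lam m * y j m ≤ lam m * (a * (⌊y j m * M⌋ : ℝ)) + 1 := by
          have h1 : lam m * y j m ≤ lam m * (a * ((⌊y j m * M⌋ : ℝ) + 1)) :=
            mul_le_mul_of_nonneg_left (hk2 m) (hpos m).le
          have h2 : lam m * a ≤ M * a := mul_le_mul_of_nonneg_right (hMle m) ha0.le
          nlinarith
        have hr1 : (-9 : ℝ) ≤ (j m : ℝ) - (⌊c⌋ : ℝ) := by
          rw [hc] at hfl1 hfl2 ⊢
          linarith
        have hr2 : (j m : ℝ) - (⌊c⌋ : ℝ) ≤ 9 := by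
          rw [hc] at hfl1 hfl2 ⊢
          linarith
        constructor
        · exact_mod_cast hr1
        · exact_mod_cast hr2
    · intro j hj j' hj' h
      have h1 := congrArg Prod.fst h
      have h2 := congrArg Prod.snd h
      funext m
      have e1 : ⌊y j m * M⌋ = ⌊y j' m * M⌋ := congrFun h1 m
      have e2 : j m - ⌊(i m : ℝ) + lam m * (a * (⌊y j m * M⌋ : ℝ)) - t m⌋
          = j' m - ⌊(i m : ℝ) + lam m * (a * (⌊y j' m * M⌋ : ℝ)) - t m⌋ := congrFun h2 m
      rw [e1] at e2
      omega
  have hprod : (T ×ˢ (B : Set (Fin d → ℤ))).ncard = T.ncard * 19 ^ d := by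
    rw [ncard_prod', Set.ncard_coe_finset, hBcard]
  have hTbd : (T.ncard : ℝ) ≤ C * a ^ ((1 : ℤ) - d) := hbd a ha0 ha1
  have hzpow : a ^ ((1 : ℤ) - d) = M ^ (d - 1) := by
    rw [ha, one_div, inv_zpow, ← zpow_neg, neg_sub]
    have : ((d : ℤ) - 1) = ((d - 1 : ℕ) : ℤ) := by
      have : (1 : ℕ) ≤ d := hd
      omega
    rw [this, zpow_natCast]
  calc (D.ncard : ℝ) ≤ ((T.ncard * 19 ^ d : ℕ) : ℝ) := by
        rw [← hprod]; exact_mod_cast hmain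
    _ = (T.ncard : ℝ) * 19 ^ d := by push_cast; ring
    _ ≤ (C * a ^ ((1 : ℤ) - d)) * 19 ^ d := by
        apply mul_le_mul_of_nonneg_right hTbd (by positivity)
    _ = (C * 19 ^ d) * M ^ (d - 1) := by rw [hzpow]; ring

theorem stmt_1 (d : ℕ) (hd : 1 ≤ d)
    (R₀ : Set (Fin d → ℝ)) (hmeas : MeasurableSet R₀)
    (hsub : R₀ ⊆ Set.univ.pi fun _ => Set.Ioc (-(1/2) : ℝ) (1/2))
    (hnbhd : R₀ ∈ 𝓝 (0 : Fin d → ℝ))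
    (hbdry : ∃ C : ℝ, 0 < C ∧ ∀ a : ℝ, 0 < a → a ≤ 1 →
      (Set.ncard {j : Fin d → ℤ |
        (Set.univ.pi (fun i => Set.Icc (a * (j i : ℝ)) (a * ((j i : ℝ) + 1))) ∩
          closure R₀).Nonempty ∧
        (Set.univ.pi (fun i => Set.Icc (a * (j i : ℝ)) (a * ((j i : ℝ) + 1))) ∩
          closure R₀ᶜ).Nonempty} : ℝ) ≤ C * a ^ ((1 : ℤ) - d))
    (t : Fin d → ℝ) (ht : ∀ i, t i ∈ Set.Icc (-(1/2) : ℝ) (1/2))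
    (lam : ℕ → Fin d → ℝ) (hpos : ∀ n i, 0 < lam n i)
    (htend : ∀ i, Tendsto (fun n => lam n i) atTop atTop)
    (hmaxmin : ∃ C : ℝ, ∀ n i j, lam n i ≤ C * lam n j) :
    ∃ C : ℝ, 0 < C ∧ ∀ n : ℕ, ∀ i : Fin d → ℤ,
      (Set.ncard {j : Fin d → ℤ |
        ((Set.univ.pi fun m => Set.Icc (t m + (j m : ℝ) - 2) (t m + (j m : ℝ) + 2)) ∩
          closure ((fun x m => (i m : ℝ) + lam n m * x m) '' R₀)).Nonempty ∧
        ((Set.univ.pi fun m => Set.Icc (t m + (j m : ℝ) - 2) (t m + (j m : ℝ) + 2)) ∩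
          closure (((fun x m => (i m : ℝ) + lam n m * x m) '' R₀)ᶜ)).Nonempty} : ℝ)
      ≤ C * (Finset.univ.sup' (Finset.univ_nonempty_iff.mpr ⟨⟨0, hd⟩⟩) (lam n)) ^ (d - 1) := by
  classical
  obtain ⟨C, hC, hbd⟩ := hbdry
  have hne : (Finset.univ : Finset (Fin d)).Nonempty := Finset.univ_nonempty_iff.mpr ⟨⟨0, hd⟩⟩
  set Mn : ℕ → ℝ := fun n => Finset.univ.sup' hne (lam n) with hMn
  have hMle : ∀ n m, lam n m ≤ Mn n := fun n m => Finset.le_sup' (lam n) (Finset.mem_univ m)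
  have hMpos : ∀ n, 0 < Mn n := fun n =>
    lt_of_lt_of_le (hpos n ⟨0, hd⟩) (hMle n ⟨0, hd⟩)
  have hev : ∀ᶠ n in atTop, ∀ m, 1 ≤ lam n m :=
    eventually_all.mpr fun m => (htend m).eventually_ge_atTop 1
  obtain ⟨N, hN⟩ := eventually_atTop.mp hev
  set K1 : ℝ := C * 19 ^ d with hK1
  have hK1pos : 0 < K1 := by positivity
  set C2 : ℝ := (Finset.range (N + 1)).sup' ⟨0, by simp⟩
    (fun n => 7 ^ d / (Mn n) ^ (d - 1)) with hC2
  refine ⟨max K1 C2, lt_of_lt_of_le hK1pos (le_max_left _ _), fun n i => ?_⟩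
  by_cases h1 : 1 ≤ Mn n
  · have hA := caseA d hd R₀ hsub C hC hbd t i (lam n) (hpos n) (Mn n) (hMle n) h1
    have hpow : (0 : ℝ) ≤ (Mn n) ^ (d - 1) := by positivity
    calc _ ≤ K1 * (Mn n) ^ (d - 1) := hA
      _ ≤ max K1 C2 * (Mn n) ^ (d - 1) :=
          mul_le_mul_of_nonneg_right (le_max_left _ _) hpow
  · push_neg at h1
    have hn : n < N + 1 := by
      by_contra hcon
      push_neg at hcon
      have h2 : 1 ≤ lam n ⟨0, hd⟩ := hN n (by omega) ⟨0, hd⟩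
      exact absurd (le_trans h2 (hMle n ⟨0, hd⟩)) (not_le.mpr h1)
    have hle1 : ∀ m, lam n m ≤ 1 := fun m => (lt_of_le_of_lt (hMle n m) h1).le
    have hb7 : (Set.ncard {j : Fin d → ℤ |
        ((Set.univ.pi fun m => Set.Icc (t m + (j m : ℝ) - 2) (t m + (j m : ℝ) + 2)) ∩
          closure ((fun x m => (i m : ℝ) + lam n m * x m) '' R₀)).Nonempty ∧
        ((Set.univ.pi fun m => Set.Icc (t m + (j m : ℝ) - 2) (t m + (j m : ℝ) + 2)) ∩
          closure (((fun x m => (i m : ℝ) + lam n m * x m) '' R₀)ᶜ)).Nonempty} : ℝ)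
        ≤ 7 ^ d := by
      exact_mod_cast caseB d R₀ hsub t ht i (lam n) (hpos n) hle1
    have hsup : 7 ^ d / (Mn n) ^ (d - 1) ≤ C2 := by
      rw [hC2]
      exact Finset.le_sup' (fun n => 7 ^ d / (Mn n) ^ (d - 1)) (Finset.mem_range.mpr hn)
    have hpow : (0 : ℝ) < (Mn n) ^ (d - 1) := pow_pos (hMpos n) _
    calc _ ≤ (7 : ℝ) ^ d := hb7
      _ = (7 ^ d / (Mn n) ^ (d - 1)) * (Mn n) ^ (d - 1) := by field_simp
      _ ≤ C2 * (Mn n) ^ (d - 1) := mul_le_mul_of_nonneg_right hsup hpow.le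
      _ ≤ max K1 C2 * (Mn n) ^ (d - 1) :=
          mul_le_mul_of_nonneg_right (le_max_right _ _) hpow.le
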